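/- In the setting above, the function $t \mapsto W_p^p(\delta_x \tilde{P}_t, \delta_y \tilde{P}_t)$ is linear (affine) on the interval $[0, T/2]$, where $T = (\max_z(-L(z,z)))^{-1}$. -/

import Mathlib

theorem stmt13 {Ω : Type*} [Fintype Ω] [DecidableEq Ω] [Nonempty Ω]
    (L : Ω → Ω → ℝ)
    (hoff : ∀ x y, x ≠ y → 0 ≤ L x y)
    (hrow : ∀ x, ∑ y, L x y = 0)
    (d : Ω → Ω → ℝ)
    (hd_nonneg : ∀ x y, 0 ≤ d x y)
    (hd_eq : ∀ x y, d x y = 0 ↔ x = y)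
    (hd_symm : ∀ x y, d x y = d y x)
    (hd_tri : ∀ x y z, d x z ≤ d x y + d y z)
    (p : ℝ) (hp : 1 ≤ p)
    (x y : Ω) (hxy : x ≠ y)
    (T : ℝ)
    (hT : T = (Finset.univ.sup' Finset.univ_nonempty (fun z : Ω => -L z z))⁻¹)
    (W : ℝ → ℝ)
    (hW : ∀ t, W t = sInf {r : ℝ | ∃ Γ : Ω → Ω → ℝ,
      (∀ v w, 0 ≤ Γ v w) ∧
      (∀ v, ∑ w, Γ v w = (if v = x then 1 else 0) + t * L x v) ∧
      (∀ w, ∑ v, Γ v w = (if w = y then 1 else 0) + t * L y w) ∧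
      r = ∑ v, ∑ w, Γ v w * d v w ^ p}) :
    ∃ m c : ℝ, ∀ t ∈ Set.Icc 0 (T / 2), W t = m * t + c := by
  classical
  rcases le_or_gt T 0 with hT0 | hT0
  · -- degenerate case : the interval is {0} or empty
    refine ⟨0, W 0, ?_⟩
    rintro t ⟨ht0, ht1⟩
    have ht : t = 0 := le_antisymm (by linarith) ht0
    rw [ht]; ring
  -- main case
  set M : ℝ := Finset.univ.sup' Finset.univ_nonempty (fun z : Ω => -L z z) with hMdef
  have hMpos : 0 < M := by
    by_contra h
    push_neg at h
    have : T ≤ 0 := by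
      rw [hT]
      exact inv_nonpos.mpr h
    linarith
  have hMT : M = T⁻¹ := by rw [hT, inv_inv]
  have hLM : ∀ z : Ω, -L z z ≤ M := fun z => Finset.le_sup' (fun z : Ω => -L z z) (Finset.mem_univ z)
  set s : ℝ := T / 2 with hsdef
  have hspos : 0 < s := by positivity
  have hsne : s ≠ 0 := ne_of_gt hspos
  have hsM : s * M = 1 / 2 := by
    rw [hMT, hsdef]
    field_simp
  set c : ℝ := d x y ^ p with hcdef
  -- the feasible-cost set
  set S : ℝ → Set ℝ := fun t => {r : ℝ | ∃ Γ : Ω → Ω → ℝ,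
      (∀ v w, 0 ≤ Γ v w) ∧
      (∀ v, ∑ w, Γ v w = (if v = x then 1 else 0) + t * L x v) ∧
      (∀ w, ∑ v, Γ v w = (if w = y then 1 else 0) + t * L y w) ∧
      r = ∑ v, ∑ w, Γ v w * d v w ^ p} with hSdef
  have hW' : ∀ t, W t = sInf (S t) := hW
  -- lower bound of the set
  have hbdd : ∀ t, BddBelow (S t) := by
    intro t
    refine ⟨0, ?_⟩
    rintro r ⟨Γ, hΓ0, -, -, hr⟩
    rw [hr]
    refine Finset.sum_nonneg fun v _ => Finset.sum_nonneg fun w _ => ?_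
    exact mul_nonneg (hΓ0 v w) (Real.rpow_nonneg (hd_nonneg v w) p)
  have hδcost : ∑ v, ∑ w, ((if v = x then (1:ℝ) else 0) * (if w = y then 1 else 0)) * d v w ^ p
      = c := by
    rw [hcdef]; simp
  -- mixing a coupling at time u with the Dirac coupling gives one at time a*u
  have hmix : ∀ (a b u : ℝ) (Γ : Ω → Ω → ℝ) (r : ℝ),
      (∀ v w, 0 ≤ a * Γ v w + b * ((if v = x then (1:ℝ) else 0) * (if w = y then 1 else 0))) →
      (∀ v, ∑ w, Γ v w = (if v = x then 1 else 0) + u * L x v) →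
      (∀ w, ∑ v, Γ v w = (if w = y then 1 else 0) + u * L y w) →
      a + b = 1 → r = ∑ v, ∑ w, Γ v w * d v w ^ p →
      (a * r + b * c) ∈ S (a * u) := by
    intro a b u Γ r h0 hrowΓ hcolΓ hab hr
    refine ⟨fun v w => a * Γ v w + b * ((if v = x then (1:ℝ) else 0) * (if w = y then 1 else 0)),
      h0, ?_, ?_, ?_⟩
    · intro v
      have h1 : ∑ w, (a * Γ v w + b * ((if v = x then (1:ℝ) else 0) * (if w = y then 1 else 0)))
          = a * (∑ w, Γ v w) + b * (if v = x then 1 else 0) := by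
        rw [Finset.sum_add_distrib, ← Finset.mul_sum]
        congr 1
        rw [← Finset.mul_sum]
        simp
      rw [h1, hrowΓ v]
      by_cases hv : v = x
      · simp only [if_pos hv]
        linear_combination hab
      · simp only [if_neg hv]
        ring
    · intro w
      have h1 : ∑ v, (a * Γ v w + b * ((if v = x then (1:ℝ) else 0) * (if w = y then 1 else 0)))
          = a * (∑ v, Γ v w) + b * (if w = y then 1 else 0) := by
        rw [Finset.sum_add_distrib, ← Finset.mul_sum]
        congr 1
        rw [← Finset.mul_sum]
        simp
      rw [h1, hcolΓ w]
      by_cases hw : w = y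
      · simp only [if_pos hw]
        linear_combination hab
      · simp only [if_neg hw]
        ring
    · rw [hr, ← hδcost, Finset.mul_sum, Finset.mul_sum, ← Finset.sum_add_distrib]
      refine Finset.sum_congr rfl fun v _ => ?_
      rw [Finset.mul_sum, Finset.mul_sum, ← Finset.sum_add_distrib]
      refine Finset.sum_congr rfl fun w _ => ?_
      ring
  -- the product coupling : feasibility for every t ∈ [0, s]
  have hprod : ∀ t, 0 ≤ t → t ≤ s →
      ∃ Γ : Ω → Ω → ℝ, (∀ v w, 0 ≤ Γ v w) ∧
      (∀ v, ∑ w, Γ v w = (if v = x then 1 else 0) + t * L x v) ∧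
      (∀ w, ∑ v, Γ v w = (if w = y then 1 else 0) + t * L y w) := by
    intro t ht0 hts
    have hμ : ∀ z v : Ω, 0 ≤ (if v = z then (1:ℝ) else 0) + t * L z v := by
      intro z v
      by_cases hv : v = z
      · subst hv
        simp only [eq_self_iff_true, if_true]
        have h1 : t * (-L v v) ≤ t * M := mul_le_mul_of_nonneg_left (hLM v) ht0
        have h2 : t * M ≤ s * M := mul_le_mul_of_nonneg_right hts (le_of_lt hMpos)
        linarith [hsM]
      · simp only [if_neg hv]
        have h1 := hoff z v (fun h => hv h.symm)
        have := mul_nonneg ht0 h1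
        linarith
    have hμsum : ∀ z : Ω, ∑ v, ((if v = z then (1:ℝ) else 0) + t * L z v) = 1 := by
      intro z
      rw [Finset.sum_add_distrib, ← Finset.mul_sum, hrow z]
      simp
    refine ⟨fun v w => ((if v = x then (1:ℝ) else 0) + t * L x v)
        * ((if w = y then (1:ℝ) else 0) + t * L y w), ?_, ?_, ?_⟩
    · intro v w; exact mul_nonneg (hμ x v) (hμ y w)
    · intro v
      rw [← Finset.mul_sum, hμsum y, mul_one]
    · intro w
      rw [← Finset.sum_mul, hμsum x, one_mul]
  have hne : ∀ t, 0 ≤ t → t ≤ s → (S t).Nonempty := by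
    intro t ht0 hts
    obtain ⟨Γ, h0, h1, h2⟩ := hprod t ht0 hts
    exact ⟨_, Γ, h0, h1, h2, rfl⟩
  -- the value at 0
  have hW0 : W 0 = c := by
    rw [hW' 0]
    apply le_antisymm
    · -- c ∈ S 0 via the Dirac coupling
      apply csInf_le (hbdd 0)
      obtain ⟨Γ, h0, h1, h2⟩ := hprod s (le_of_lt hspos) le_rfl
      have hm := hmix 0 1 s Γ (∑ v, ∑ w, Γ v w * d v w ^ p) ?_ h1 h2 (by ring) rfl
      · simpa using hm
      · intro v w
        have h3 : (0:ℝ) ≤ (if v = x then (1:ℝ) else 0) * (if w = y then 1 else 0) := by positivity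
        simpa using h3
    · apply le_csInf (hne 0 le_rfl (le_of_lt hspos))
      rintro r ⟨Γ, hΓ0, hrowΓ, hcolΓ, hr⟩
      -- at t = 0, the coupling is the Dirac coupling
      have hcol0 : ∀ w, w ≠ y → ∀ v, Γ v w = 0 := by
        intro w hw v
        have hsum : ∑ v, Γ v w = 0 := by
          rw [hcolΓ w]; simp [hw]
        have := (Finset.sum_eq_zero_iff_of_nonneg (fun v _ => hΓ0 v w)).mp hsum
        exact this v (Finset.mem_univ v)
      have hΓxy : Γ x y = 1 := by
        have hsum : ∑ w, Γ x w = 1 := by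
          rw [hrowΓ x]; simp
        have hone : ∑ w, Γ x w = Γ x y := by
          apply Finset.sum_eq_single y
          · intro w _ hw; exact hcol0 w hw x
          · intro h; exact absurd (Finset.mem_univ y) h
        rw [hone] at hsum; exact hsum
      have hterm : Γ x y * d x y ^ p ≤ ∑ w, Γ x w * d x w ^ p :=
        Finset.single_le_sum (f := fun w => Γ x w * d x w ^ p)
          (fun w _ => mul_nonneg (hΓ0 x w) (Real.rpow_nonneg (hd_nonneg x w) p))
          (Finset.mem_univ y)
      have houter : ∑ w, Γ x w * d x w ^ p ≤ r := by
        rw [hr]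
        exact Finset.single_le_sum (f := fun v => ∑ w, Γ v w * d v w ^ p)
          (fun v _ => Finset.sum_nonneg fun w _ =>
            mul_nonneg (hΓ0 v w) (Real.rpow_nonneg (hd_nonneg v w) p))
          (Finset.mem_univ x)
      calc c = Γ x y * d x y ^ p := by rw [hΓxy, one_mul]
        _ ≤ ∑ w, Γ x w * d x w ^ p := hterm
        _ ≤ r := houter
  -- upper bound (convexity)
  have hup : ∀ t, 0 ≤ t → t ≤ s → W t ≤ (t / s) * W s + (1 - t / s) * c := by
    intro t ht0 hts
    rcases eq_or_lt_of_le ht0 with h0 | h0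
    · rw [← h0, hW0]; simp
    · have hlam : 0 < t / s := div_pos h0 hspos
      have hlam1 : t / s ≤ 1 := (div_le_one hspos).mpr hts
      have hkey : ∀ r ∈ S s, W t ≤ (t / s) * r + (1 - t / s) * c := by
        rintro r ⟨Γ, hΓ0, hrowΓ, hcolΓ, hr⟩
        have hmem := hmix (t / s) (1 - t / s) s Γ r ?_ hrowΓ hcolΓ (by ring) hr
        · have hts' : t / s * s = t := div_mul_cancel₀ t hsne
          rw [hts'] at hmem
          rw [hW' t]
          exact csInf_le (hbdd t) hmem
        · intro v w
          have h3 : (0:ℝ) ≤ (if v = x then (1:ℝ) else 0) * (if w = y then 1 else 0) := by positivity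
          exact add_nonneg (mul_nonneg (le_of_lt hlam) (hΓ0 v w))
            (mul_nonneg (by linarith) h3)
      -- pass to the infimum
      have h2 : (W t - (1 - t / s) * c) / (t / s) ≤ sInf (S s) := by
        apply le_csInf (hne s (le_of_lt hspos) le_rfl)
        intro r hrS
        rw [div_le_iff₀ hlam]
        have h4 := hkey r hrS
        have h5 : r * (t / s) = (t / s) * r := mul_comm _ _
        linarith
      rw [← hW' s, div_le_iff₀ hlam] at h2
      have h6 : W s * (t / s) = (t / s) * W s := mul_comm _ _
      linarith
  -- lower bound (extrapolation)
  have hlow : ∀ t, 0 < t → t ≤ s → (t / s) * W s + (1 - t / s) * c ≤ W t := by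
    intro t ht0 hts
    have htne : t ≠ 0 := ne_of_gt ht0
    have hpos : 0 < s / t := div_pos hspos ht0
    rw [hW' t]
    apply le_csInf (hne t (le_of_lt ht0) hts)
    rintro r ⟨Γ, hΓ0, hrowΓ, hcolΓ, hr⟩
    -- mass at (x,y) : Γ x y ≥ 1 - t/s
    have hmass : 1 - t / s ≤ Γ x y := by
      have hx_row : ∑ w, Γ x w = 1 + t * L x x := by rw [hrowΓ x]; simp
      have hsplit : ∑ w, Γ x w = Γ x y + ∑ w ∈ Finset.univ.erase y, Γ x w := by
        rw [← Finset.sum_erase_add Finset.univ _ (Finset.mem_univ y)]; ring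
      have hcol_bound : ∀ w, Γ x w ≤ (if w = y then 1 else 0) + t * L y w := by
        intro w
        rw [← hcolΓ w]
        exact Finset.single_le_sum (fun v _ => hΓ0 v w) (Finset.mem_univ x)
      have herase : ∑ w ∈ Finset.univ.erase y, Γ x w
          ≤ ∑ w ∈ Finset.univ.erase y, ((if w = y then (1:ℝ) else 0) + t * L y w) :=
        Finset.sum_le_sum fun w _ => hcol_bound w
      have herase2 : ∑ w ∈ Finset.univ.erase y, ((if w = y then (1:ℝ) else 0) + t * L y w)
          = t * (-L y y) := by
        rw [Finset.sum_add_distrib]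
        have e1 : ∑ w ∈ Finset.univ.erase y, (if w = y then (1:ℝ) else 0) = 0 := by
          apply Finset.sum_eq_zero
          intro w hw
          simp [Finset.ne_of_mem_erase hw]
        have e2 : ∑ w ∈ Finset.univ.erase y, L y w = -L y y := by
          have e3 := Finset.sum_erase_add Finset.univ (L y) (Finset.mem_univ y)
          rw [hrow y] at e3
          linarith
        rw [e1, ← Finset.mul_sum, e2]
        ring
      have h1 : 1 + t * L x x + t * L y y ≤ Γ x y := by
        have h1a := herase.trans_eq herase2
        linarith [hsplit, hx_row]
      have h2 : t * (-L x x) ≤ t * M := mul_le_mul_of_nonneg_left (hLM x) (le_of_lt ht0)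
      have h3 : t * (-L y y) ≤ t * M := mul_le_mul_of_nonneg_left (hLM y) (le_of_lt ht0)
      -- t / s = 2 t M  since s M = 1/2
      have h4 : t / s = 2 * (t * M) := by
        rw [div_eq_iff hsne]
        linear_combination (-2) * t * hsM
      linarith
    -- extrapolated coupling at time s
    have hmem := hmix (s / t) (1 - s / t) t Γ r ?_ hrowΓ hcolΓ (by ring) hr
    · have hst : s / t * t = s := div_mul_cancel₀ s (ne_of_gt ht0)
      rw [hst] at hmem
      have hWs : W s ≤ (s / t) * r + (1 - s / t) * c := by
        rw [hW' s]
        exact csInf_le (hbdd s) hmem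
      have hmul := mul_le_mul_of_nonneg_left hWs (le_of_lt (div_pos ht0 hspos))
      have hident : (t / s) * ((s / t) * r + (1 - s / t) * c) = r + (t / s) * c - c := by
        field_simp
        ring
      rw [hident] at hmul
      calc (t / s) * W s + (1 - t / s) * c
          = (t / s) * W s + c - (t / s) * c := by ring
        _ ≤ (r + (t / s) * c - c) + c - (t / s) * c := by linarith
        _ = r := by ring
    · intro v w
      rcases eq_or_ne v x with hv | hv
      · rcases eq_or_ne w y with hw | hw
        · subst hv; subst hw
          rw [if_pos rfl, if_pos rfl, one_mul, mul_one]
          have hid : (s / t) * (1 - t / s) = s / t - 1 := by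
            field_simp
          have hmm := mul_le_mul_of_nonneg_left hmass (le_of_lt hpos)
          rw [hid] at hmm
          linarith
        · rw [if_neg hw, mul_zero, mul_zero, add_zero]
          exact mul_nonneg (le_of_lt hpos) (hΓ0 v w)
      · rw [if_neg hv, zero_mul, mul_zero, add_zero]
        exact mul_nonneg (le_of_lt hpos) (hΓ0 v w)
  -- conclusion
  refine ⟨(W s - c) / s, c, ?_⟩
  rintro t ⟨ht0, hts⟩
  rcases eq_or_lt_of_le ht0 with h0 | h0
  · rw [← h0, hW0]; ring
  · have h1 := hup t ht0 hts
    have h2 := hlow t h0 hts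
    have heq : W t = (t / s) * W s + (1 - t / s) * c := le_antisymm h1 h2
    rw [heq]
    field_simp
    ring
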